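/- Consider the KPSA with n bidders and m = n(n−1) items, each chosen with probability 1/m: for each ordered pair (i,i') of distinct bidders there is an item I_{i,i'} with V(i, I_{i,i'}) = 1, V(i', I_{i,i'}) = 1/2, and 0 for all other bidders. The signaling scheme with C(n,2) signals, emitting σ_{i,i'} (for unordered pair {i,i'}) when either I_{i,i'} or I_{i',i} is chosen, achieves revenue 3/4. -/

import Mathlib

open Finset

/-- The second-largest value of `f` (counting multiplicity): the supremum of
`min (f i) (f j)` over pairs of distinct indices. -/
noncomputable def secondmax {ι : Type*} [Fintype ι] (f : ι → ℝ) : ℝ :=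
  sSup {x | ∃ i j : ι, i ≠ j ∧ x = min (f i) (f j)}

/-- A signaling scheme: nonnegative entries, and for each good `j` the signal
probabilities sum to one. -/
def IsScheme {S J : Type*} [Fintype S] (φ : S → J → ℝ) : Prop :=
  (∀ σ j, 0 ≤ φ σ j) ∧ ∀ j, ∑ σ, φ σ j = 1

/-- Revenue of a signaling scheme under normalized valuations `Ψ`. -/
noncomputable def Rev {S : Type*} [Fintype S] {n : ℕ} {J : Type*} [Fintype J]
    (Ψ : Fin n → J → ℝ) (φ : S → J → ℝ) : ℝ :=
  ∑ σ, secondmax (fun i => ∑ j, φ σ j * Ψ i j)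

lemma secondmax_aux {ι : Type*} [Fintype ι] (f : ι → ℝ) (c : ℝ) (a b : ι)
    (hab : a ≠ b) (ha : f a = c) (hb : f b = c) (hle : ∀ i, f i ≤ c) :
    secondmax f = c := by
  apply IsGreatest.csSup_eq
  constructor
  · exact ⟨a, b, hab, by rw [ha, hb, min_self]⟩
  · rintro x ⟨i, j, hij, rfl⟩
    exact le_trans (min_le_left _ _) (hle i)

lemma card_lt_pairs (n : ℕ) :
    2 * Fintype.card {p : Fin n × Fin n // p.1 < p.2} = n * n - n := by
  rw [Fintype.card_subtype]
  have hswap : (univ.filter fun p : Fin n × Fin n => p.1 < p.2).card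
      = (univ.filter fun p : Fin n × Fin n => p.2 < p.1).card := by
    apply Finset.card_bij' (fun p _ => Prod.swap p) (fun p _ => Prod.swap p) <;>
      simp [Finset.mem_filter]
  have hdisj : Disjoint (univ.filter fun p : Fin n × Fin n => p.1 < p.2)
      (univ.filter fun p : Fin n × Fin n => p.2 < p.1) := by
    rw [Finset.disjoint_filter]
    intro p _ h1
    exact not_lt_of_gt h1
  have hunion : (univ.filter fun p : Fin n × Fin n => p.1 < p.2) ∪
      (univ.filter fun p : Fin n × Fin n => p.2 < p.1)
      = univ.filter fun p : Fin n × Fin n => p.1 ≠ p.2 := by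
    rw [← Finset.filter_or]
    apply Finset.filter_congr
    intro p _
    simp [lt_or_lt_iff_ne, ne_comm]
  have hcard := Finset.card_union_of_disjoint hdisj
  rw [hunion, ← hswap] at hcard
  have hOD : (univ.filter fun p : Fin n × Fin n => p.1 ≠ p.2)
      = (univ : Finset (Fin n)).offDiag := by
    ext p; simp [Finset.mem_offDiag]
  rw [hOD, Finset.offDiag_card, Finset.card_univ, Fintype.card_fin] at hcard
  omega

theorem stmt18 {n : ℕ} (hn : 2 ≤ n) :
    IsScheme (fun (σ : {p : Fin n × Fin n // p.1 < p.2})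
        (I : {p : Fin n × Fin n // p.1 ≠ p.2}) =>
      if I.1 = σ.1 ∨ I.1 = (σ.1.2, σ.1.1) then (1 : ℝ) else 0) ∧
    Rev (fun (i : Fin n) (I : {p : Fin n × Fin n // p.1 ≠ p.2}) =>
        if i = I.1.1 then 1 / ((n : ℝ) * ((n : ℝ) - 1))
        else if i = I.1.2 then 1 / (2 * ((n : ℝ) * ((n : ℝ) - 1))) else 0)
      (fun (σ : {p : Fin n × Fin n // p.1 < p.2})
          (I : {p : Fin n × Fin n // p.1 ≠ p.2}) =>
        if I.1 = σ.1 ∨ I.1 = (σ.1.2, σ.1.1) then (1 : ℝ) else 0)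
      = 3 / 4 := by
  constructor
  · constructor
    · intro σ j; dsimp only; split <;> norm_num
    · intro I
      obtain ⟨⟨x, y⟩, hxy⟩ := I
      simp only [ne_eq] at hxy
      rcases lt_or_gt_of_ne hxy with h | h
      · have key : ∀ σ : {p : Fin n × Fin n // p.1 < p.2},
            ((x, y) = σ.1 ∨ (x, y) = (σ.1.2, σ.1.1)) ↔ σ = ⟨(x, y), h⟩ := by
          rintro ⟨⟨a, b⟩, hab⟩
          simp only [Subtype.mk.injEq, Prod.mk.injEq]
          constructor
          · rintro (⟨rfl, rfl⟩ | ⟨rfl, rfl⟩)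
            · exact ⟨rfl, rfl⟩
            · exact absurd h (not_lt_of_gt hab)
          · rintro ⟨rfl, rfl⟩; left; exact ⟨rfl, rfl⟩
        simp only [key]
        simp
      · have key : ∀ σ : {p : Fin n × Fin n // p.1 < p.2},
            ((x, y) = σ.1 ∨ (x, y) = (σ.1.2, σ.1.1)) ↔ σ = ⟨(y, x), h⟩ := by
          rintro ⟨⟨a, b⟩, hab⟩
          simp only [Subtype.mk.injEq, Prod.mk.injEq]
          constructor
          · rintro (⟨rfl, rfl⟩ | ⟨rfl, rfl⟩)
            · exact absurd h (not_lt_of_gt hab)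
            · exact ⟨rfl, rfl⟩
          · rintro ⟨rfl, rfl⟩; right; exact ⟨rfl, rfl⟩
        simp only [key]
        simp
  · set m : ℝ := (n : ℝ) * ((n : ℝ) - 1) with hm
    have hn2 : (2 : ℝ) ≤ (n : ℝ) := by exact_mod_cast hn
    have hmpos : 0 < m := by
      apply mul_pos <;> linarith
    have hm0 : m ≠ 0 := ne_of_gt hmpos
    have hsum : 1 / m + 1 / (2 * m) = 3 / (2 * m) := by
      field_simp
      ring
    have key : ∀ σ : {p : Fin n × Fin n // p.1 < p.2},
        secondmax (fun i : Fin n => ∑ j : {p : Fin n × Fin n // p.1 ≠ p.2},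
          (if j.1 = σ.1 ∨ j.1 = (σ.1.2, σ.1.1) then (1 : ℝ) else 0) *
          (if i = j.1.1 then 1 / m else if i = j.1.2 then 1 / (2 * m) else 0))
        = 3 / (2 * m) := by
      rintro ⟨⟨a, b⟩, hab⟩
      have hne : a ≠ b := ne_of_lt hab
      set j1 : {p : Fin n × Fin n // p.1 ≠ p.2} := ⟨(a, b), hne⟩ with hj1
      set j2 : {p : Fin n × Fin n // p.1 ≠ p.2} := ⟨(b, a), hne.symm⟩ with hj2
      have hj12 : j1 ≠ j2 := by
        simp only [hj1, hj2, ne_eq, Subtype.mk.injEq, Prod.mk.injEq]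
        rintro ⟨rfl, -⟩; exact hne rfl
      have hcond : ∀ j : {p : Fin n × Fin n // p.1 ≠ p.2},
          (j.1 = (a, b) ∨ j.1 = (b, a)) ↔ j ∈ ({j1, j2} : Finset _) := by
        intro j
        simp [hj1, hj2, Subtype.ext_iff, Finset.mem_insert, Finset.mem_singleton]
      have hf : ∀ i : Fin n, (∑ j : {p : Fin n × Fin n // p.1 ≠ p.2},
          (if j.1 = (a, b) ∨ j.1 = (b, a) then (1 : ℝ) else 0) *
          (if i = j.1.1 then 1 / m else if i = j.1.2 then 1 / (2 * m) else 0))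
          = (if i = a then 1 / m else if i = b then 1 / (2 * m) else 0)
          + (if i = b then 1 / m else if i = a then 1 / (2 * m) else 0) := by
        intro i
        rw [Finset.sum_congr rfl (fun j _ => by
          rw [if_congr (hcond j) rfl rfl, ite_mul, one_mul, zero_mul])]
        rw [Finset.sum_ite_mem, Finset.univ_inter, Finset.sum_pair hj12]
      have hfa : (∑ j : {p : Fin n × Fin n // p.1 ≠ p.2},
          (if j.1 = (a, b) ∨ j.1 = (b, a) then (1 : ℝ) else 0) *
          (if a = j.1.1 then 1 / m else if a = j.1.2 then 1 / (2 * m) else 0))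
          = 3 / (2 * m) := by
        rw [hf, if_pos rfl, if_neg hne, if_pos rfl, hsum]
      have hfb : (∑ j : {p : Fin n × Fin n // p.1 ≠ p.2},
          (if j.1 = (a, b) ∨ j.1 = (b, a) then (1 : ℝ) else 0) *
          (if b = j.1.1 then 1 / m else if b = j.1.2 then 1 / (2 * m) else 0))
          = 3 / (2 * m) := by
        rw [hf, if_neg hne.symm, if_pos rfl, if_pos rfl, add_comm, hsum]
      apply secondmax_aux _ _ a b hne hfa hfb
      intro i
      by_cases h1 : i = a
      · subst h1; exact le_of_eq hfa
      by_cases h2 : i = b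
      · subst h2; exact le_of_eq hfb
      rw [hf, if_neg h1, if_neg h2, if_neg h2, if_neg h1, add_zero]
      positivity
    rw [Rev]
    rw [Finset.sum_congr rfl (fun σ _ => key σ)]
    rw [Finset.sum_const, Finset.card_univ, nsmul_eq_mul]
    have hnn : n ≤ n * n := Nat.le_mul_of_pos_left n (by omega)
    have hc : 2 * (Fintype.card {p : Fin n × Fin n // p.1 < p.2} : ℝ) = m := by
      have h := congrArg (Nat.cast : ℕ → ℝ) (card_lt_pairs n)
      push_cast [Nat.cast_sub hnn] at h
      rw [h, hm]; ring
    rw [show (Fintype.card {p : Fin n × Fin n // p.1 < p.2} : ℝ) = m / 2 by linarith]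
    field_simp
    ring
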